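/- For a real random variable X and η ≠ 0 with E[exp(η² X²)] < ∞, the complex characteristic function ζ ↦ E[exp(i ζ X)] is an entire function of ζ. -/

import Mathlib

open MeasureTheory Complex Metric

private lemma key_ineq (η : ℝ) (hη : η ≠ 0) (a x : ℝ) :
    a * |x| ≤ η ^ 2 * x ^ 2 + a ^ 2 / (4 * η ^ 2) := by
  have h4 : (0:ℝ) < 4 * η ^ 2 := by positivity
  rw [← sub_le_iff_le_add', le_div_iff₀ h4]
  calc (a * |x| - η ^ 2 * x ^ 2) * (4 * η ^ 2)
      = a ^ 2 - (2 * η ^ 2 * |x| - a) ^ 2 := by rw [← _root_.sq_abs x]; ring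
    _ ≤ a ^ 2 := by nlinarith [sq_nonneg (2 * η ^ 2 * |x| - a)]

theorem charFun_complex_entire
    (μ : Measure ℝ) [IsProbabilityMeasure μ] (η : ℝ) (hη : η ≠ 0)
    (hint : Integrable (fun x : ℝ => Real.exp (η ^ 2 * x ^ 2)) μ) :
    Differentiable ℂ (fun ζ : ℂ => ∫ x : ℝ, Complex.exp (I * ζ * x) ∂μ) := by
  intro ζ₀
  set R : ℝ := |ζ₀.im| + 1 with hR
  have hbound : Integrable
      (fun x : ℝ => Real.exp (η ^ 2 * x ^ 2 + (R + 1) ^ 2 / (4 * η ^ 2))) μ := by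
    simpa [Real.exp_add] using hint.mul_const (Real.exp ((R + 1) ^ 2 / (4 * η ^ 2)))
  -- norm of exp (I ζ x)
  have hnorm : ∀ (ζ : ℂ) (x : ℝ), ‖Complex.exp (I * ζ * x)‖ = Real.exp (-ζ.im * x) := by
    intro ζ x
    rw [Complex.norm_exp]
    congr 1
    simp [Complex.mul_re, Complex.mul_im]
  have hmeas : ∀ ζ : ℂ, AEStronglyMeasurable (fun x : ℝ => Complex.exp (I * ζ * x)) μ := by
    intro ζ
    exact (Complex.continuous_exp.comp (by continuity)).aestronglyMeasurable
  have himball : ∀ ζ ∈ ball ζ₀ 1, |ζ.im| ≤ R := by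
    intro ζ hζ
    have h1 : |ζ.im - ζ₀.im| ≤ ‖ζ - ζ₀‖ := by
      simpa using Complex.abs_im_le_norm (ζ - ζ₀)
    have h2 : ‖ζ - ζ₀‖ < 1 := mem_ball_iff_norm.mp hζ
    calc |ζ.im| ≤ |ζ₀.im| + |ζ.im - ζ₀.im| := by
          have := abs_sub_abs_le_abs_sub ζ.im ζ₀.im
          linarith [abs_sub_comm ζ.im ζ₀.im ▸ (abs_sub_abs_le_abs_sub ζ.im ζ₀.im)]
      _ ≤ R := by rw [hR]; linarith
  have main := hasDerivAt_integral_of_dominated_loc_of_deriv_le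
      (F := fun (ζ : ℂ) (x : ℝ) => Complex.exp (I * ζ * x))
      (F' := fun (ζ : ℂ) (x : ℝ) => I * x * Complex.exp (I * ζ * x))
      (x₀ := ζ₀) (s := ball ζ₀ 1)
      (bound := fun x : ℝ => Real.exp (η ^ 2 * x ^ 2 + (R + 1) ^ 2 / (4 * η ^ 2)))
      (ball_mem_nhds ζ₀ one_pos)
      (Filter.Eventually.of_forall fun ζ => hmeas ζ)
      ?_ ?_ ?_ hbound ?_
  · exact main.2.differentiableAt
  · -- Integrable (F ζ₀)
    refine hbound.mono (hmeas ζ₀) (Filter.Eventually.of_forall fun x => ?_)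
    rw [hnorm]
    rw [Real.norm_eq_abs, _root_.abs_of_nonneg (Real.exp_pos _).le]
    apply Real.exp_le_exp.mpr
    have h1 : -ζ₀.im * x ≤ |ζ₀.im| * |x| := by
      calc -ζ₀.im * x ≤ |(-ζ₀.im) * x| := le_abs_self _
        _ = |ζ₀.im| * |x| := by rw [abs_mul, abs_neg]
    have h2 : |ζ₀.im| * |x| ≤ (R + 1) * |x| := by
      apply mul_le_mul_of_nonneg_right _ (abs_nonneg x)
      rw [hR]; linarith
    have h3 := key_ineq η hη (R + 1) x
    exact h1.trans (h2.trans h3)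
  · exact (Continuous.aestronglyMeasurable (by continuity :
      Continuous fun x : ℝ => I * (x:ℂ) * Complex.exp (I * ζ₀ * x)))
  · -- bound on derivative
    refine Filter.Eventually.of_forall fun x => fun ζ hζ => ?_
    have him := himball ζ hζ
    rw [norm_mul, norm_mul, hnorm]
    simp only [Complex.norm_I, one_mul, Complex.norm_real, Real.norm_eq_abs]
    have hx : |x| ≤ Real.exp |x| := by linarith [Real.add_one_le_exp |x|]
    have h1 : -ζ.im * x ≤ R * |x| := by
      calc -ζ.im * x ≤ |(-ζ.im) * x| := le_abs_self _
        _ = |ζ.im| * |x| := by rw [abs_mul, abs_neg]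
        _ ≤ R * |x| := mul_le_mul_of_nonneg_right him (abs_nonneg x)
    calc |x| * Real.exp (-ζ.im * x)
        ≤ Real.exp |x| * Real.exp (R * |x|) := by
          apply mul_le_mul hx (Real.exp_le_exp.mpr h1) (Real.exp_pos _).le (Real.exp_pos _).le
      _ = Real.exp ((R + 1) * |x|) := by rw [← Real.exp_add]; ring_nf
      _ ≤ Real.exp (η ^ 2 * x ^ 2 + (R + 1) ^ 2 / (4 * η ^ 2)) :=
          Real.exp_le_exp.mpr (key_ineq η hη (R + 1) x)
  · -- differentiability
    refine Filter.Eventually.of_forall fun x => fun ζ _ => ?_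
    have h : HasDerivAt (fun ζ : ℂ => Complex.exp (I * x * ζ))
        (I * x * Complex.exp (I * x * ζ)) ζ := by
      simpa [mul_comm] using ((hasDerivAt_id ζ).const_mul (I * (x:ℂ))).cexp
    have e : ∀ ζ' : ℂ, I * ζ' * (x:ℂ) = I * x * ζ' := fun ζ' => by ring
    simp only [e]; exact h
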